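/- arXiv:2512.22115 — 3 statements merged into one kernel-verified Lean document; each statement's English description precedes it below -/
import Mathlib

section
/- Let g > 0, κ ≥ 0, γ ∈ ℝ, h ∈ (0,∞), and let j be a nonzero integer. Set G̃(j) := j·tanh(h·j), Ω(j) := √( G̃(j)·( g + κ·j² + (γ²/4)·G̃(j)/j² ) ) + (γ/2)·G̃(j)/j, and M(j) := ( G̃(j) / ( g + κ·j² + (γ²/4)·G̃(j)/j² ) )^{1/4} (the denominator is strictly positive since g > 0 and G̃(j) ≥ 0). Then the row vector ℓ_j := ( M(j)^{-1} − γ·M(j)/(2j) , i·M(j) ) is a left eigenvector of the matrix A_j := [[0, G̃(j)], [−(g + κ·j²), −i·γ·G̃(j)/j]] with eigenvalue −i·Ω(j), i.e. ℓ_j·A_j = −i·Ω(j)·ℓ_j. Consequently, for any solution (η_j(t), ψ_j(t)) of the linear ODE system (η̇_j, ψ̇_j)ᵀ = A_j(η_j, ψ_j)ᵀ, the complex variable u_j(t) := (1/√2)·( (M(j)^{-1} − γ·M(j)/(2j))·η_j(t) + i·M(j)·ψ_j(t) ) satisfies u̇_j = −i·Ω(j)·u_j. -/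
/-- `G̃(j) = j tanh(h j)`, the symbol of the Dirichlet-Neumann operator at the flat state. -/
noncomputable def Gtilde (h : ℝ) (j : ℤ) : ℝ := (j : ℝ) * Real.tanh (h * j)

/-- The linear normal mode frequencies of the water waves equations with gravity `g`,
surface tension `κ`, constant vorticity `γ` and depth `h`. -/
noncomputable def Omega (g κ γ h : ℝ) (j : ℤ) : ℝ :=
  Real.sqrt (Gtilde h j * (g + κ * (j : ℝ) ^ 2 + γ ^ 2 / 4 * Gtilde h j / (j : ℝ) ^ 2))
    + γ / 2 * Gtilde h j / (j : ℝ)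

/-- The symbol `M(j) = ( G̃(j) / (g + κ j² + (γ²/4) G̃(j)/j²) )^{1/4}`. -/
noncomputable def Msymb (g κ γ h : ℝ) (j : ℤ) : ℝ :=
  (Gtilde h j / (g + κ * (j : ℝ) ^ 2 + γ ^ 2 / 4 * Gtilde h j / (j : ℝ) ^ 2)) ^ ((1 : ℝ) / 4)

/-- The `j`-th Fourier block of the linearized water waves equations at the flat equilibrium. -/
noncomputable def Amat (g κ γ h : ℝ) (j : ℤ) : Matrix (Fin 2) (Fin 2) ℂ :=
  !![0, ((Gtilde h j : ℝ) : ℂ);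
     -(((g + κ * (j : ℝ) ^ 2 : ℝ)) : ℂ),
     -Complex.I * ((γ * Gtilde h j / (j : ℝ) : ℝ) : ℂ)]

/-- The row vector `ℓ_j = ( M(j)⁻¹ − γ M(j)/(2j) , i M(j) )`. -/
noncomputable def lvec (g κ γ h : ℝ) (j : ℤ) : Fin 2 → ℂ :=
  ![(((Msymb g κ γ h j)⁻¹ - γ * Msymb g κ γ h j / (2 * (j : ℝ)) : ℝ) : ℂ),
    Complex.I * ((Msymb g κ γ h j : ℝ) : ℂ)]

lemma Gtilde_pos (h : ℝ) (hh : 0 < h) (j : ℤ) (hj : j ≠ 0) : 0 < Gtilde h j := by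
  unfold Gtilde
  rcases lt_or_gt_of_ne (show (j : ℝ) ≠ 0 by exact_mod_cast hj) with hjn | hjp
  · have : Real.tanh (h * j) < 0 := by
      rw [Real.tanh_eq_sinh_div_cosh]
      exact div_neg_of_neg_of_pos (Real.sinh_neg_iff.2 (by nlinarith)) (Real.cosh_pos _)
    exact mul_pos_of_neg_of_neg hjn this
  · have : 0 < Real.tanh (h * j) := by
      rw [Real.tanh_eq_sinh_div_cosh]
      exact div_pos (Real.sinh_pos_iff.2 (by nlinarith)) (Real.cosh_pos _)
    exact mul_pos hjp this

/-- `ℓ_j` is a left eigenvector of `A_j` with eigenvalue `−i Ω(j)`; consequently, for any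
solution of the linear ODE system given by `A_j`, the complex variable
`u_j = (1/√2)( (M(j)⁻¹ − γM(j)/(2j)) η_j + i M(j) ψ_j )` solves `u̇_j = −i Ω(j) u_j`. -/
theorem stmt1 (g κ γ h : ℝ) (hg : 0 < g) (hκ : 0 ≤ κ) (hh : 0 < h) (j : ℤ) (hj : j ≠ 0) :
    Matrix.vecMul (lvec g κ γ h j) (Amat g κ γ h j)
      = (-Complex.I * ((Omega g κ γ h j : ℝ) : ℂ)) • lvec g κ γ h j ∧
    ∀ η ψ : ℝ → ℂ,
      (∀ t, HasDerivAt η (Amat g κ γ h j 0 0 * η t + Amat g κ γ h j 0 1 * ψ t) t) →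
      (∀ t, HasDerivAt ψ (Amat g κ γ h j 1 0 * η t + Amat g κ γ h j 1 1 * ψ t) t) →
      ∀ t, HasDerivAt
        (fun s => ((1 / Real.sqrt 2 : ℝ) : ℂ) * (lvec g κ γ h j 0 * η s + lvec g κ γ h j 1 * ψ s))
        (-Complex.I * ((Omega g κ γ h j : ℝ) : ℂ) *
          (((1 / Real.sqrt 2 : ℝ) : ℂ) * (lvec g κ γ h j 0 * η t + lvec g κ γ h j 1 * ψ t))) t := by
  have hjR : (j : ℝ) ≠ 0 := by exact_mod_cast hj
  set G := Gtilde h j with hGdef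
  have hG : 0 < G := Gtilde_pos h hh j hj
  set D := g + κ * (j : ℝ) ^ 2 + γ ^ 2 / 4 * G / (j : ℝ) ^ 2 with hDdef
  have hD : 0 < D := by
    have h1 : 0 ≤ κ * (j : ℝ) ^ 2 := mul_nonneg hκ (sq_nonneg _)
    have h2 : 0 ≤ γ ^ 2 / 4 * G / (j : ℝ) ^ 2 :=
      div_nonneg (mul_nonneg (by positivity) hG.le) (sq_nonneg _)
    positivity
  set a := Real.sqrt G with hadef
  set b := Real.sqrt D with hbdef
  have ha : 0 < a := Real.sqrt_pos.2 hG
  have hb : 0 < b := Real.sqrt_pos.2 hD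
  have ha2 : a ^ 2 = G := Real.sq_sqrt hG.le
  have hb2 : b ^ 2 = D := Real.sq_sqrt hD.le
  set m := Msymb g κ γ h j with hmdef
  have hm : 0 < m := by
    rw [hmdef, Msymb]
    exact Real.rpow_pos_of_pos (div_pos hG hD) _
  have hm2 : m ^ 2 * b = a := by
    have h1 : m ^ 2 = Real.sqrt (G / D) := by
      rw [hmdef, Msymb, ← Real.rpow_natCast (_ ^ ((1:ℝ)/4)) 2,
        ← Real.rpow_mul (div_pos hG hD).le, Real.sqrt_eq_rpow]
      norm_num
    rw [h1, Real.sqrt_div' G hD.le]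
    field_simp
    rw [hadef, hbdef]; ring
  have hOm : Omega g κ γ h j = a * b + γ / 2 * G / (j : ℝ) := by
    rw [Omega, ← hGdef, ← hDdef, Real.sqrt_mul hG.le, ← hadef, ← hbdef]
  -- key real identities
  have key2 : m * (g + κ * (j : ℝ) ^ 2) =
      Omega g κ γ h j * (m⁻¹ - γ * m / (2 * (j : ℝ))) := by
    have hgk : g + κ * (j : ℝ) ^ 2 = D - γ ^ 2 / 4 * G / (j : ℝ) ^ 2 := by
      rw [hDdef]; ring
    rw [hOm, hgk]
    field_simp
    linear_combination (-16*(j:ℝ)^2*m^2) * hb2 + (16*(j:ℝ)^2*b + 8*(j:ℝ)*γ*a) * hm2 + (8*(j:ℝ)*γ) * ha2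
  have key1 : (m⁻¹ - γ * m / (2 * (j : ℝ))) * G + m * (γ * G / (j : ℝ)) =
      Omega g κ γ h j * m := by
    rw [hOm]
    field_simp
    linear_combination (-2*(j:ℝ)) * ha2 + ((-2*(j:ℝ))*a) * hm2
  -- the eigenvector identity in ℂ
  have c0 : lvec g κ γ h j 0 * Amat g κ γ h j 0 0 + lvec g κ γ h j 1 * Amat g κ γ h j 1 0
      = -Complex.I * ((Omega g κ γ h j : ℝ) : ℂ) * lvec g κ γ h j 0 := by
    have k2 : ((m * (g + κ * (j : ℝ) ^ 2) : ℝ) : ℂ)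
        = ((Omega g κ γ h j * (m⁻¹ - γ * m / (2 * (j : ℝ))) : ℝ) : ℂ) :=
      congrArg Complex.ofReal key2
    simp only [lvec, Amat, ← hmdef, Matrix.cons_val_zero, Matrix.cons_val_one,
      Matrix.head_cons, Matrix.of_apply, Matrix.cons_val']
    push_cast at k2 ⊢
    linear_combination (-Complex.I) * k2
  have c1 : lvec g κ γ h j 0 * Amat g κ γ h j 0 1 + lvec g κ γ h j 1 * Amat g κ γ h j 1 1
      = -Complex.I * ((Omega g κ γ h j : ℝ) : ℂ) * lvec g κ γ h j 1 := by
    have k1 : (((m⁻¹ - γ * m / (2 * (j : ℝ))) * G + m * (γ * G / (j : ℝ)) : ℝ) : ℂ)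
        = ((Omega g κ γ h j * m : ℝ) : ℂ) := congrArg Complex.ofReal key1
    simp only [lvec, Amat, ← hmdef, ← hGdef, Matrix.cons_val_zero, Matrix.cons_val_one,
      Matrix.head_cons, Matrix.of_apply, Matrix.cons_val']
    push_cast at k1 ⊢
    linear_combination k1 + (((Omega g κ γ h j : ℝ):ℂ) * (m:ℂ) - (m:ℂ)*((γ:ℂ)*(G:ℂ)/(j:ℂ))) * Complex.I_sq
  have heig : Matrix.vecMul (lvec g κ γ h j) (Amat g κ γ h j)
      = (-Complex.I * ((Omega g κ γ h j : ℝ) : ℂ)) • lvec g κ γ h j := by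
    funext i
    fin_cases i
    · simpa [Matrix.vecMul, dotProduct, Fin.sum_univ_two, smul_eq_mul, mul_assoc] using c0
    · simpa [Matrix.vecMul, dotProduct, Fin.sum_univ_two, smul_eq_mul, mul_assoc] using c1
  refine ⟨heig, ?_⟩
  intro η ψ hη hψ t
  have hd := (((hη t).const_mul (lvec g κ γ h j 0)).add
      ((hψ t).const_mul (lvec g κ γ h j 1))).const_mul ((1 / Real.sqrt 2 : ℝ) : ℂ)
  refine hd.congr_deriv (Eq.symm ?_)
  linear_combination (((1 / Real.sqrt 2 : ℝ) : ℂ) * η t) * c0.symm +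
    (((1 / Real.sqrt 2 : ℝ) : ℂ) * ψ t) * c1.symm
end

section
/- Let h > 0, c_h := √(tanh h), and let p ≥ 2 be an integer. Then there exists a unique ψ > 0 such that √( (ψ+p)·tanh(h·(ψ+p)) ) + √( ψ·tanh(h·ψ) ) = p·c_h. Equivalently, with ω^σ(φ,h) := c_h·φ − σ·√(φ·tanh(h·φ)) for σ = ±1, there is a unique ψ > 0 with ω^{+1}(ψ + p, h) = ω^{−1}(ψ, h). -/
open Real

lemma my_tanh_nonneg {x : ℝ} (hx : 0 ≤ x) : 0 ≤ Real.tanh x := by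
  rw [Real.tanh_eq_sinh_div_cosh]
  exact div_nonneg (Real.sinh_nonneg_iff.2 hx) (Real.cosh_pos x).le

lemma my_tanh_lt_tanh {a b : ℝ} (hab : a < b) : Real.tanh a < Real.tanh b := by
  rw [Real.tanh_eq_sinh_div_cosh, Real.tanh_eq_sinh_div_cosh,
    div_lt_div_iff₀ (Real.cosh_pos a) (Real.cosh_pos b)]
  have : 0 < Real.sinh (b - a) := Real.sinh_pos_iff.2 (by linarith)
  rw [Real.sinh_sub] at this
  nlinarith

lemma my_tanh_pos {x : ℝ} (hx : 0 < x) : 0 < Real.tanh x := by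
  have := my_tanh_lt_tanh hx
  rwa [Real.tanh_zero] at this

lemma my_tanh_subadd {a b : ℝ} (ha : 0 < a) (hb : 0 < b) :
    Real.tanh (a + b) < Real.tanh a + Real.tanh b := by
  have hca := Real.cosh_pos a
  have hcb := Real.cosh_pos b
  have hsa := Real.sinh_pos_iff.2 ha
  have hsb := Real.sinh_pos_iff.2 hb
  rw [Real.tanh_eq_sinh_div_cosh, Real.tanh_eq_sinh_div_cosh, Real.tanh_eq_sinh_div_cosh,
    Real.sinh_add, Real.cosh_add, div_add_div _ _ (ne_of_gt hca) (ne_of_gt hcb),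
    div_lt_div_iff₀ (by nlinarith) (by positivity)]
  nlinarith [mul_pos (add_pos (mul_pos hsa hcb) (mul_pos hca hsb)) (mul_pos hsa hsb)]

lemma my_tanh_nat_mul (h : ℝ) (hh : 0 < h) : ∀ n : ℕ, Real.tanh (n * h) ≤ n * Real.tanh h := by
  intro n
  induction n with
  | zero => simp
  | succ n ih =>
    rcases Nat.eq_zero_or_pos n with h0 | h0
    · simp [h0]
    · have : Real.tanh ((n : ℝ) * h + h) < Real.tanh ((n : ℝ) * h) + Real.tanh h :=
        my_tanh_subadd (by positivity) hh
      have heq : ((n : ℝ) + 1) * h = (n : ℝ) * h + h := by ring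
      push_cast
      rw [heq]
      linarith

lemma my_g_mono (h : ℝ) (hh : 0 < h) {a b : ℝ} (ha : 0 ≤ a) (hab : a < b) :
    Real.sqrt (a * Real.tanh (h * a)) < Real.sqrt (b * Real.tanh (h * b)) := by
  apply Real.sqrt_lt_sqrt (mul_nonneg ha (my_tanh_nonneg (mul_nonneg hh.le ha)))
  have h1 : Real.tanh (h * a) < Real.tanh (h * b) := my_tanh_lt_tanh (by nlinarith)
  have h2 : 0 ≤ Real.tanh (h * a) := my_tanh_nonneg (by positivity)
  nlinarith

/-- For every depth `h > 0` and every integer `p ≥ 2` there is a unique `ψ > 0` at which the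
two eigenvalue curves `ω^{+1}(ψ+p,h)` and `ω^{−1}(ψ,h)` of the Bloch-Floquet operator
collide, i.e. `√((ψ+p)tanh(h(ψ+p))) + √(ψ tanh(hψ)) = p c_h` with `c_h = √tanh h`. -/
theorem stmt11 (h : ℝ) (hh : 0 < h) (p : ℕ) (hp : 2 ≤ p) :
    ∃! ψ : ℝ, 0 < ψ ∧
      Real.sqrt ((ψ + p) * Real.tanh (h * (ψ + p))) + Real.sqrt (ψ * Real.tanh (h * ψ))
        = p * Real.sqrt (Real.tanh h) := by
  set F : ℝ → ℝ := fun ψ =>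
    Real.sqrt ((ψ + p) * Real.tanh (h * (ψ + p))) + Real.sqrt (ψ * Real.tanh (h * ψ)) with hF
  have hp0 : (0 : ℝ) < p := by positivity
  have hp1 : (1 : ℝ) ≤ p := by exact_mod_cast (by omega : 1 ≤ p)
  -- strict monotonicity of F on [0,∞)
  have hmono : ∀ a b : ℝ, 0 ≤ a → a < b → F a < F b := by
    intro a b ha hab
    have h1 := my_g_mono h hh (by linarith : (0:ℝ) ≤ a + p) (by linarith : a + p < b + p)
    have h2 := my_g_mono h hh ha hab
    simpa [hF] using add_lt_add h1 h2
  -- continuity of F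
  have htanh : Continuous Real.tanh := by
    have : Real.tanh = fun x => Real.sinh x / Real.cosh x := by
      funext x; exact Real.tanh_eq_sinh_div_cosh x
    rw [this]
    exact Real.continuous_sinh.div Real.continuous_cosh fun x => (Real.cosh_pos x).ne'
  have hcont : Continuous F := by
    apply Continuous.add
    · exact ((continuous_id.add continuous_const).mul
        (htanh.comp (continuous_const.mul (continuous_id.add continuous_const)))).sqrt
    · exact (continuous_id.mul (htanh.comp (continuous_const.mul continuous_id))).sqrt
  -- F 0 < target
  have hth : 0 < Real.tanh h := my_tanh_pos hh
  have key : Real.tanh (h * p) < p * Real.tanh h := by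
    have h1 : Real.tanh (((p - 1 : ℕ) : ℝ) * h + h) <
        Real.tanh (((p - 1 : ℕ) : ℝ) * h) + Real.tanh h := by
      apply my_tanh_subadd _ hh
      have : (1 : ℝ) ≤ ((p - 1 : ℕ) : ℝ) := by exact_mod_cast (by omega : 1 ≤ p - 1)
      nlinarith
    have h2 := my_tanh_nat_mul h hh (p - 1)
    have hcast : ((p - 1 : ℕ) : ℝ) = (p : ℝ) - 1 := by
      push_cast [Nat.cast_sub (by omega : 1 ≤ p)]; ring
    rw [hcast] at h1 h2
    have : h * p = ((p : ℝ) - 1) * h + h := by ring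
    rw [this]
    linarith
  have hF0 : F 0 < p * Real.sqrt (Real.tanh h) := by
    have : F 0 = Real.sqrt ((p : ℝ) * Real.tanh (h * p)) := by
      simp [hF]
    rw [this]
    have heq : (p : ℝ) * Real.sqrt (Real.tanh h) = Real.sqrt ((p:ℝ)^2 * Real.tanh h) := by
      rw [Real.sqrt_mul (by positivity), Real.sqrt_sq hp0.le]
    rw [heq]
    apply Real.sqrt_lt_sqrt (mul_nonneg hp0.le (my_tanh_nonneg (by positivity)))
    nlinarith
  -- F (p^2) > target
  have hM : p * Real.sqrt (Real.tanh h) < F ((p:ℝ)^2) := by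
    have h1 : 0 < Real.sqrt (((p:ℝ)^2 + p) * Real.tanh (h * ((p:ℝ)^2 + p))) := by
      apply Real.sqrt_pos.2
      have := my_tanh_pos (show (0:ℝ) < h * ((p:ℝ)^2 + p) by positivity)
      positivity
    have h2 : p * Real.sqrt (Real.tanh h) ≤ Real.sqrt ((p:ℝ)^2 * Real.tanh (h * (p:ℝ)^2)) := by
      have heq : (p : ℝ) * Real.sqrt (Real.tanh h) = Real.sqrt ((p:ℝ)^2 * Real.tanh h) := by
        rw [Real.sqrt_mul (by positivity), Real.sqrt_sq hp0.le]
      rw [heq]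
      apply Real.sqrt_le_sqrt
      have : Real.tanh h ≤ Real.tanh (h * (p:ℝ)^2) := by
        apply le_of_lt
        apply my_tanh_lt_tanh
        have hp2 : (2:ℝ) ≤ (p:ℝ) := by exact_mod_cast hp
        nlinarith [mul_pos hh (show (0:ℝ) < (p:ℝ)^2 - 1 by nlinarith)]
      nlinarith
    simp only [hF]
    linarith
  -- IVT
  have hsub := intermediate_value_Icc (by positivity : (0:ℝ) ≤ (p:ℝ)^2) hcont.continuousOn
  obtain ⟨ψ, hψmem, hψeq⟩ := hsub ⟨hF0.le, hM.le⟩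
  have hψpos : 0 < ψ := by
    rcases lt_or_eq_of_le hψmem.1 with h' | h'
    · exact h'
    · exfalso; rw [← h'] at hψeq; linarith
  refine ⟨ψ, ⟨hψpos, hψeq⟩, ?_⟩
  rintro y ⟨hy, hyeq⟩
  by_contra hne
  have hyF : F y = p * Real.sqrt (Real.tanh h) := hyeq
  rcases lt_or_gt_of_ne hne with hlt | hlt
  · have := hmono y ψ hy.le hlt
    rw [hyF, hψeq] at this
    exact lt_irrefl _ this
  · have := hmono ψ y hψpos.le hlt
    rw [hyF, hψeq] at this
    exact lt_irrefl _ this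
end

section
/- Let h > 0 and c_h := √(tanh h). For each integer p ≥ 2 let ψ_p > 0 be the unique positive solution of √( (ψ+p)·tanh(h·(ψ+p)) ) + √( ψ·tanh(h·ψ) ) = p·c_h, and define ω_*^{(p)}(h) := c_h·ψ_p + √( ψ_p·tanh(h·ψ_p) ). Then 0 < ω_*^{(2)}(h) < ω_*^{(3)}(h) < … < ω_*^{(p)}(h) < … , and lim_{p→+∞} ω_*^{(p)}(h) = +∞. -/
lemma aux_hasDerivAt_tanh (x : ℝ) :
    HasDerivAt Real.tanh (1 / Real.cosh x ^ 2) x := by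
  have h1 : HasDerivAt (fun y => Real.sinh y / Real.cosh y)
      ((Real.cosh x * Real.cosh x - Real.sinh x * Real.sinh x) / Real.cosh x ^ 2) x :=
    (Real.hasDerivAt_sinh x).div (Real.hasDerivAt_cosh x) (Real.cosh_pos x).ne'
  have h2 : (Real.cosh x * Real.cosh x - Real.sinh x * Real.sinh x) / Real.cosh x ^ 2
      = 1 / Real.cosh x ^ 2 := by
    have := Real.cosh_sq_sub_sinh_sq x
    congr 1
    nlinarith
  have h3 : (fun y => Real.sinh y / Real.cosh y) = Real.tanh := by
    funext y; rw [Real.tanh_eq_sinh_div_cosh]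
  rw [h3, h2] at h1
  exact h1

lemma aux_tanh_strictMono : StrictMono Real.tanh :=
  strictMono_of_deriv_pos fun x => by
    rw [(aux_hasDerivAt_tanh x).deriv]; positivity

lemma aux_tanh_lt_one (x : ℝ) : Real.tanh x < 1 := by
  rw [Real.tanh_eq_sinh_div_cosh, div_lt_one (Real.cosh_pos x)]
  have h1 := Real.cosh_sub_sinh x
  have h2 := Real.exp_pos (-x)
  linarith

lemma aux_self_lt_sinh_mul_cosh {x : ℝ} (hx : 0 < x) :
    x < Real.sinh x * Real.cosh x := by
  have h2 : 2 * x < Real.sinh (2 * x) := Real.self_lt_sinh_iff.mpr (by linarith)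
  rw [Real.sinh_two_mul] at h2
  linarith

lemma aux_tanh_div_anti : StrictAntiOn (fun x => Real.tanh x / x) (Set.Ioi 0) := by
  apply strictAntiOn_of_deriv_neg (convex_Ioi 0)
  · intro x hx
    exact ((aux_hasDerivAt_tanh x).continuousAt.div continuousAt_id
      (ne_of_gt hx)).continuousWithinAt
  · intro x hx
    rw [interior_Ioi] at hx
    have hx0 : (0:ℝ) < x := hx
    have hd : HasDerivAt (fun y => Real.tanh y / y)
        ((1 / Real.cosh x ^ 2 * x - Real.tanh x * 1) / x ^ 2) x :=
      (aux_hasDerivAt_tanh x).div (hasDerivAt_id x) hx0.ne'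
    rw [hd.deriv]
    apply div_neg_of_neg_of_pos _ (by positivity)
    have hc := Real.cosh_pos x
    have h1 := aux_self_lt_sinh_mul_cosh hx0
    have h2 : 1 / Real.cosh x ^ 2 * x < Real.sinh x / Real.cosh x := by
      rw [one_div, inv_mul_eq_div, div_lt_div_iff₀ (by positivity) hc]
      nlinarith [mul_lt_mul_of_pos_right h1 hc]
    rw [Real.tanh_eq_sinh_div_cosh]
    linarith

/-- For `0 < a < b`, `tanh a / a > tanh b / b`, in product form. -/
lemma aux_key {a b : ℝ} (ha : 0 < a) (hab : a < b) :
    a * Real.tanh b < b * Real.tanh a := by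
  have hb : 0 < b := ha.trans hab
  have := aux_tanh_div_anti (Set.mem_Ioi.mpr ha) (Set.mem_Ioi.mpr hb) hab
  rw [div_lt_div_iff₀ hb ha] at this
  linarith

/-- Let `ψ_p > 0` be the unique positive solution of
`√((ψ+p)tanh(h(ψ+p))) + √(ψ tanh(hψ)) = p √tanh h` and set
`ω_*^{(p)}(h) = √(tanh h) ψ_p + √(ψ_p tanh(h ψ_p))`. Then the double eigenvalues
`ω_*^{(p)}(h)` form a strictly increasing positive sequence diverging to `+∞`. -/
theorem stmt12 (h : ℝ) (hh : 0 < h) (ψ : ℕ → ℝ)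
    (hψ : ∀ p : ℕ, 2 ≤ p → 0 < ψ p ∧
      Real.sqrt ((ψ p + p) * Real.tanh (h * (ψ p + p)))
          + Real.sqrt (ψ p * Real.tanh (h * ψ p))
        = p * Real.sqrt (Real.tanh h)) :
    0 < Real.sqrt (Real.tanh h) * ψ 2 + Real.sqrt (ψ 2 * Real.tanh (h * ψ 2)) ∧
    (∀ p q : ℕ, 2 ≤ p → p < q →
      Real.sqrt (Real.tanh h) * ψ p + Real.sqrt (ψ p * Real.tanh (h * ψ p))
        < Real.sqrt (Real.tanh h) * ψ q + Real.sqrt (ψ q * Real.tanh (h * ψ q))) ∧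
    Filter.Tendsto
      (fun p : ℕ => Real.sqrt (Real.tanh h) * ψ p + Real.sqrt (ψ p * Real.tanh (h * ψ p)))
      Filter.atTop Filter.atTop := by
  -- Basic constants and the function `g`
  have htanh_pos : 0 < Real.tanh h := by
    have := aux_tanh_strictMono hh
    rwa [Real.tanh_zero] at this
  set c : ℝ := Real.sqrt (Real.tanh h) with hcdef
  have hc : 0 < c := Real.sqrt_pos.mpr htanh_pos
  set g : ℝ → ℝ := fun x => Real.sqrt (x * Real.tanh (h * x)) with hgdef
  have htanh_nonneg : ∀ x : ℝ, 0 ≤ x → 0 ≤ Real.tanh x := by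
    intro x hx
    rcases eq_or_lt_of_le hx with h' | h'
    · rw [← h', Real.tanh_zero]
    · have := aux_tanh_strictMono h'
      rw [Real.tanh_zero] at this
      exact this.le
  have hg_nonneg : ∀ x : ℝ, 0 ≤ g x := fun x => Real.sqrt_nonneg _
  have hg_sq : ∀ x : ℝ, 0 ≤ x → g x ^ 2 = x * Real.tanh (h * x) := by
    intro x hx
    exact Real.sq_sqrt (mul_nonneg hx (htanh_nonneg _ (by positivity)))
  have hg_mono : ∀ a b : ℝ, 0 ≤ a → a ≤ b → g a ≤ g b := by
    intro a b ha hab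
    apply Real.sqrt_le_sqrt
    have h1 : Real.tanh (h * a) ≤ Real.tanh (h * b) :=
      aux_tanh_strictMono.monotone (by nlinarith)
    have h2 : 0 ≤ Real.tanh (h * a) := htanh_nonneg _ (by positivity)
    nlinarith
  -- the cross inequality `g b * a < g a * b` for `0 < a < b`
  have hcross : ∀ a b : ℝ, 0 < a → a < b → g b * a < g a * b := by
    intro a b ha hab
    have hb : 0 < b := ha.trans hab
    have hk : h * a * Real.tanh (h * b) < h * b * Real.tanh (h * a) :=
      aux_key (by positivity) (by nlinarith)
    have hk' : a * Real.tanh (h * b) < b * Real.tanh (h * a) := by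
      have hh' : 0 < h := hh
      nlinarith
    have hsq : (g b * a) ^ 2 < (g a * b) ^ 2 := by
      have e1 : (g b * a) ^ 2 = (b * Real.tanh (h * b)) * a ^ 2 := by
        rw [mul_pow, hg_sq b hb.le]
      have e2 : (g a * b) ^ 2 = (a * Real.tanh (h * a)) * b ^ 2 := by
        rw [mul_pow, hg_sq a ha.le]
      rw [e1, e2]
      nlinarith [mul_lt_mul_of_pos_left hk' (mul_pos ha hb)]
    exact lt_of_pow_lt_pow_left₀ 2 (mul_nonneg (hg_nonneg a) hb.le) hsq
  -- the linear bound `g a ≤ c * a` for `1 ≤ a`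
  have hlin : ∀ a : ℝ, 1 ≤ a → g a ≤ c * a := by
    intro a ha
    have ha0 : 0 < a := lt_of_lt_of_le one_pos ha
    have hbnd : a * Real.tanh (h * a) ≤ Real.tanh h * a ^ 2 := by
      rcases eq_or_lt_of_le ha with h' | h'
      · rw [← h']; simp
      · have := aux_key hh (by nlinarith : h < h * a)
        nlinarith
    have : g a ≤ Real.sqrt (Real.tanh h * a ^ 2) := Real.sqrt_le_sqrt hbnd
    rwa [Real.sqrt_mul htanh_pos.le, Real.sqrt_sq ha0.le] at this
  -- strict monotonicity of `f x = c * x - g x` on `[1, ∞)`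
  have hf_mono : ∀ a b : ℝ, 1 ≤ a → a < b → c * a - g a < c * b - g b := by
    intro a b ha hab
    have ha0 : 0 < a := lt_of_lt_of_le one_pos ha
    have h1 : g b * a < g a * b := hcross a b ha0 hab
    have h2 : g a ≤ c * a := hlin a ha
    have key : (g b - g a) * a < (c * (b - a)) * a := by
      nlinarith [mul_le_mul_of_nonneg_right h2 (le_of_lt (sub_pos.mpr hab))]
    have := (mul_lt_mul_iff_of_pos_right ha0).mp key
    linarith
  -- rewrite ω_p using the defining equation
  have homega : ∀ p : ℕ, 2 ≤ p →
      c * ψ p + g (ψ p) = c * (ψ p + p) - g (ψ p + p) := by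
    intro p hp
    have heq := (hψ p hp).2
    have : g (ψ p + p) + g (ψ p) = p * c := heq
    linarith
  have hx_gt : ∀ p : ℕ, 2 ≤ p → (p : ℝ) < ψ p + p := by
    intro p hp
    have := (hψ p hp).1
    linarith
  -- strict monotonicity of `x_p = ψ p + p`
  have hx_mono : ∀ p q : ℕ, 2 ≤ p → p < q → ψ p + p < ψ q + q := by
    intro p q hp hpq
    by_contra hcon
    push_neg at hcon
    have hq : 2 ≤ q := le_trans hp hpq.le
    have hψp := (hψ p hp).1
    have hψq := (hψ q hq).1
    have hpq' : (p : ℝ) < q := by exact_mod_cast hpq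
    have h1 : ψ q ≤ ψ p := by linarith
    have h2 : g (ψ q) ≤ g (ψ p) := hg_mono _ _ hψq.le h1
    have h3 : g (ψ q + q) ≤ g (ψ p + p) := hg_mono _ _ (by linarith) hcon
    have heqp := (hψ p hp).2
    have heqq := (hψ q hq).2
    have : (q : ℝ) * c ≤ (p : ℝ) * c := by
      rw [← heqp, ← heqq]; exact add_le_add h3 h2
    nlinarith
  refine ⟨?_, ?_, ?_⟩
  · -- positivity of ω_2
    have hψ2 := (hψ 2 le_rfl).1
    have := hg_nonneg (ψ 2)
    nlinarith
  · -- strict monotonicity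
    intro p q hp hpq
    have hq : 2 ≤ q := le_trans hp hpq.le
    have h1 : c * ψ p + g (ψ p) = c * (ψ p + p) - g (ψ p + p) := homega p hp
    have h2 : c * ψ q + g (ψ q) = c * (ψ q + q) - g (ψ q + q) := homega q hq
    have h3 : (1 : ℝ) ≤ ψ p + p := by
      have := hx_gt p hp
      have : (2 : ℝ) ≤ (p : ℝ) := by exact_mod_cast hp
      have := (hψ p hp).1
      linarith
    have h4 := hf_mono (ψ p + p) (ψ q + q) h3 (hx_mono p q hp hpq)
    calc c * ψ p + g (ψ p) = c * (ψ p + p) - g (ψ p + p) := h1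
      _ < c * (ψ q + q) - g (ψ q + q) := h4
      _ = c * ψ q + g (ψ q) := h2.symm
  · -- divergence
    have hlow : ∀ p : ℕ, 2 ≤ p →
        c / 2 * (p : ℝ) - 1 / (2 * c) ≤ c * ψ p + g (ψ p) := by
      intro p hp
      set x : ℝ := ψ p + p with hxdef
      have hx0 : 0 < x := by
        have := (hψ p hp).1
        have hp' : (0 : ℝ) ≤ (p : ℝ) := Nat.cast_nonneg p
        simp only [hxdef]; linarith
      have h1 : c * ψ p + g (ψ p) = c * x - g x := homega p hp
      -- g x ≤ √x
      have h2 : g x ≤ Real.sqrt x := by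
        have : x * Real.tanh (h * x) ≤ x :=
          by nlinarith [aux_tanh_lt_one (h * x), htanh_nonneg (h * x) (by positivity)]
        exact Real.sqrt_le_sqrt this
      -- √x ≤ (c x + 1/c)/2
      have h3 : Real.sqrt x ≤ (c * x + 1 / c) / 2 := by
        have hb : x ≤ ((c * x + 1 / c) / 2) ^ 2 := by
          have hc2 : 0 < c ^ 2 := by positivity
          have expand : ((c * x + 1 / c) / 2) ^ 2 - x
              = ((c * x - 1 / c) / 2) ^ 2 := by
            field_simp
            ring
          nlinarith [sq_nonneg ((c * x - 1 / c) / 2)]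
        calc Real.sqrt x ≤ Real.sqrt (((c * x + 1 / c) / 2) ^ 2) :=
              Real.sqrt_le_sqrt hb
          _ = (c * x + 1 / c) / 2 := Real.sqrt_sq (by positivity)
      have h4 : (p : ℝ) ≤ x := (hx_gt p hp).le
      have h5 : c / 2 * (p : ℝ) ≤ c / 2 * x :=
        mul_le_mul_of_nonneg_left h4 (by positivity)
      have : 1 / (2 * c) = (1 / c) / 2 := by ring
      rw [h1]
      nlinarith
    have hbase : Filter.Tendsto (fun p : ℕ => c / 2 * (p : ℝ) - 1 / (2 * c))
        Filter.atTop Filter.atTop := by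
      apply Filter.tendsto_atTop_add_const_right
      exact tendsto_natCast_atTop_atTop.const_mul_atTop (by positivity)
    refine Filter.tendsto_atTop_mono' Filter.atTop ?_ hbase
    filter_upwards [Filter.eventually_ge_atTop 2] with p hp
    exact hlow p hp
end
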